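/- For every real m > 0 and C ∈ ℝ, if v : [1, m+1] → ℝ is a C¹ nonnegative function satisfying v'(γ) = 2√2·√(v(γ)) + p_C(γ)·γ on [1, m+1] together with both boundary conditions v(1) = 2 and v(m+1) = 2(m+1)², then v(γ) > 2γ² for all γ in the open interval (1, m+1). -/

import Mathlib

open Set Filter

/-- The coefficient `A(C)` from the paper (depending on `m`). -/
noncomputable def Acoef (m C : ℝ) : ℝ :=
  3 * C / m * (1 - 1 / (m + 1) ^ 2) - 6 / m * (1 + 1 / (m + 1) ^ 2)

/-- The coefficient `B(C)` from the paper (depending on `m`). -/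
noncomputable def Bcoef (m C : ℝ) : ℝ :=
  -2 * C * (1 + 1 / m - 1 / (m * (m + 1) ^ 2)) + 4 * (1 + 1 / m + 1 / (m * (m + 1) ^ 2))

/-- The polynomial `p_C(γ) = A(C)·γ³/3 + B(C)·γ²/2 + C`. -/
noncomputable def pC (m C γ : ℝ) : ℝ :=
  Acoef m C * γ ^ 3 / 3 + Bcoef m C * γ ^ 2 / 2 + C

/-- The right-hand side `2√2·√(v γ) + p_C(γ)·γ` of the ODE. -/
noncomputable def odeRHS (m C : ℝ) (v : ℝ → ℝ) (γ : ℝ) : ℝ :=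
  2 * Real.sqrt 2 * Real.sqrt (v γ) + pC m C γ * γ

/-- `v` is a `C¹` nonnegative solution of the ODE IVP
`v' = 2√2·√v + p_C(γ)·γ`, `v 1 = 2`, on the set `S`. -/
def IsSolOn (m C : ℝ) (v : ℝ → ℝ) (S : Set ℝ) : Prop :=
  v 1 = 2 ∧ ∀ γ ∈ S, 0 ≤ v γ ∧ HasDerivWithinAt v (odeRHS m C v γ) S γ

/-- `v` is a solution of the IVP on `S` which cannot be continued to any strictly
larger subinterval of `[1, m+1]`, i.e. `S` is the maximal interval of existence. -/
def IsMaxSolOn (m C : ℝ) (v : ℝ → ℝ) (S : Set ℝ) : Prop :=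
  IsSolOn m C v S ∧
    ∀ T : Set ℝ, T ⊆ Set.Icc 1 (m + 1) → T.OrdConnected → S ⊆ T → S ≠ T →
      ¬∃ w : ℝ → ℝ, IsSolOn m C w T ∧ ∀ γ ∈ S, w γ = v γ

lemma pC_one {m : ℝ} (hm : 0 < m) (C : ℝ) : pC m C 1 = 2 := by
  have h1 : m ≠ 0 := hm.ne'
  have h2 : m + 1 ≠ 0 := by positivity
  simp only [pC, Acoef, Bcoef]
  field_simp
  ring

lemma pC_end {m : ℝ} (hm : 0 < m) (C : ℝ) : pC m C (m + 1) = -2 := by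
  have h1 : m ≠ 0 := hm.ne'
  have h2 : m + 1 ≠ 0 := by positivity
  simp only [pC, Acoef, Bcoef]
  field_simp
  ring

lemma pC_hasDerivAt (m C γ : ℝ) :
    HasDerivAt (fun x => pC m C x) (Acoef m C * γ ^ 2 + Bcoef m C * γ) γ := by
  have h := ((((hasDerivAt_pow 3 γ).const_mul (Acoef m C)).div_const 3).add
    ((((hasDerivAt_pow 2 γ).const_mul (Bcoef m C)).div_const 2).add_const C))
  refine HasDerivAt.congr_deriv (h.congr_of_eventuallyEq (Filter.Eventually.of_forall fun x => ?_)) ?_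
  · simp [pC]; ring
  · push_cast; ring

lemma pC_continuous (m C : ℝ) : Continuous (fun x => pC m C x) := by
  unfold pC; fun_prop

/-- No sign pattern `-,+` strictly inside `(1, m+1)` after the positive start:
if `pC` were negative then nonnegative inside, together with `pC 1 = 2 > 0` and
`pC (m+1) = -2 < 0` the linear function `A·γ + B` would change sign twice. -/
lemma cubic_no_pmp {m C a b : ℝ} (hm : 0 < m) (ha : 1 < a) (hab : a < b) (hbm : b < m + 1)
    (hpa : pC m C a < 0) (hpb : 0 ≤ pC m C b) : False := by
  set A := Acoef m C
  set B := Bcoef m C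
  have hder : ∀ x ∈ Set.Ioo (0:ℝ) (m+2), HasDerivAt (fun x => pC m C x) (A * x ^ 2 + B * x) x :=
    fun x _ => pC_hasDerivAt m C x
  have hcont : ∀ s t : ℝ, ContinuousOn (fun x => pC m C x) (Icc s t) :=
    fun s t => (pC_continuous m C).continuousOn
  have mvt : ∀ s t : ℝ, 1 ≤ s → s < t → t ≤ m + 1 →
      ∃ ξ ∈ Ioo s t, A * ξ ^ 2 + B * ξ = (pC m C t - pC m C s) / (t - s) := by
    intro s t hs hst htm
    exact exists_hasDerivAt_eq_slope (fun x => pC m C x) (fun x => A * x ^ 2 + B * x) hst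
      (hcont s t) (fun x hx => pC_hasDerivAt m C x)
  obtain ⟨ξ₁, hξ₁, e₁⟩ := mvt 1 a le_rfl ha (by linarith)
  obtain ⟨ξ₂, hξ₂, e₂⟩ := mvt a b (by linarith) hab (by linarith)
  obtain ⟨ξ₃, hξ₃, e₃⟩ := mvt b (m+1) (by linarith) hbm le_rfl
  have h1 : pC m C 1 = 2 := pC_one hm C
  have h2 : pC m C (m+1) = -2 := pC_end hm C
  have d1 : A * ξ₁ ^ 2 + B * ξ₁ < 0 := by
    rw [e₁, h1]; apply div_neg_of_neg_of_pos <;> linarith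
  have d2 : 0 < A * ξ₂ ^ 2 + B * ξ₂ := by
    rw [e₂]; apply div_pos <;> linarith
  have d3 : A * ξ₃ ^ 2 + B * ξ₃ < 0 := by
    rw [e₃, h2]; apply div_neg_of_neg_of_pos <;> linarith
  have p1 : (0:ℝ) < ξ₁ := by have := hξ₁.1; linarith
  have p2 : (0:ℝ) < ξ₂ := by have := hξ₂.1; linarith
  have p3 : (0:ℝ) < ξ₃ := by have := hξ₃.1; linarith
  have l1 : A * ξ₁ + B < 0 := by nlinarith
  have l2 : 0 < A * ξ₂ + B := by nlinarith
  have l3 : A * ξ₃ + B < 0 := by nlinarith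
  have o12 : ξ₁ < ξ₂ := lt_trans hξ₁.2 hξ₂.1
  have o23 : ξ₂ < ξ₃ := lt_trans hξ₂.2 hξ₃.1
  nlinarith [mul_pos (sub_pos.2 o12) (sub_pos.2 o23)]

lemma exists_gamma0 {m : ℝ} (hm : 0 < m) (C : ℝ) :
    ∃ γ₀, 1 ≤ γ₀ ∧ γ₀ < m + 1 ∧ (∀ γ, 1 ≤ γ → γ ≤ γ₀ → 0 ≤ pC m C γ) ∧
      (∀ γ, γ₀ < γ → γ ≤ m + 1 → pC m C γ < 0) := by
  set T : Set ℝ := Icc 1 (m+1) ∩ (fun x => pC m C x) ⁻¹' Ici 0 with hT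
  have hTc : IsClosed T := isClosed_Icc.inter (isClosed_Ici.preimage (pC_continuous m C))
  have h1T : (1:ℝ) ∈ T := by
    refine ⟨⟨le_rfl, by linarith⟩, ?_⟩
    simp [pC_one hm C]
  have hbdd : BddAbove T := BddAbove.mono (inter_subset_left) bddAbove_Icc
  set γ₀ := sSup T with hγ₀
  have hγ₀T : γ₀ ∈ T := hTc.csSup_mem ⟨1, h1T⟩ hbdd
  have hγ₀1 : 1 ≤ γ₀ := le_csSup hbdd h1T
  have hγ₀m : γ₀ < m + 1 := by
    rcases lt_or_eq_of_le hγ₀T.1.2 with h | h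
    · exact h
    · exfalso
      have := hγ₀T.2
      rw [Set.mem_preimage, h, pC_end hm C] at this
      simp at this; linarith [this]
  refine ⟨γ₀, hγ₀1, hγ₀m, ?_, ?_⟩
  · intro γ hγ1 hγγ₀
    by_contra hneg
    push_neg at hneg
    rcases eq_or_lt_of_le hγ1 with h | h
    · rw [← h] at hneg; rw [pC_one hm C] at hneg; linarith
    rcases eq_or_lt_of_le hγγ₀ with h' | h'
    · rw [h'] at hneg; exact absurd hγ₀T.2 (by simpa using not_le.2 hneg)
    · exact cubic_no_pmp hm h h' hγ₀m hneg hγ₀T.2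
  · intro γ hγ hγm
    by_contra hneg
    push_neg at hneg
    have : γ ∈ T := ⟨⟨by linarith, hγm⟩, hneg⟩
    exact absurd (le_csSup hbdd this) (not_le.2 hγ)

/-- If `v` is a `C¹` nonnegative solution of the ODE on `[1, m+1]` satisfying both
boundary conditions `v 1 = 2` and `v (m+1) = 2(m+1)²`, then `v(γ) > 2γ²` on `(1, m+1)`. -/
theorem stmt1 (m : ℝ) (hm : 0 < m) (C : ℝ) (v : ℝ → ℝ)
    (hsol : IsSolOn m C v (Set.Icc 1 (m + 1)))
    (hbc : v (m + 1) = 2 * (m + 1) ^ 2) :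
    ∀ γ ∈ Set.Ioo (1 : ℝ) (m + 1), 2 * γ ^ 2 < v γ := by
  obtain ⟨hv1, hode⟩ := hsol
  have hm1 : (1:ℝ) < m + 1 := by linarith
  set S := Set.Icc (1:ℝ) (m+1) with hS
  set h : ℝ → ℝ := fun γ => v γ - 2 * γ ^ 2 with hh
  have hderiv : ∀ γ ∈ S, HasDerivWithinAt h (odeRHS m C v γ - 4 * γ) S γ := by
    intro γ hγ
    have h2 : HasDerivAt (fun γ : ℝ => 2 * γ ^ 2) (4 * γ) γ := by
      have := (hasDerivAt_pow 2 γ).const_mul (2:ℝ)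
      refine HasDerivAt.congr_deriv this ?_
      push_cast; ring
    exact (hode γ hγ).2.sub h2.hasDerivWithinAt
  have hcont : ContinuousOn h S := fun γ hγ => (hderiv γ hγ).continuousWithinAt
  have h1_0 : h 1 = 0 := by simp [hh, hv1]
  have hend_0 : h (m+1) = 0 := by simp [hh, hbc]
  have sqrt2_sq : Real.sqrt 2 * Real.sqrt 2 = 2 := Real.mul_self_sqrt (by norm_num)
  have hsqrt_gt : ∀ γ : ℝ, 0 ≤ γ → 2 * γ ^ 2 < v γ → Real.sqrt 2 * γ < Real.sqrt (v γ) := by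
    intro γ hγ hv
    have : Real.sqrt (2 * γ ^ 2) < Real.sqrt (v γ) := Real.sqrt_lt_sqrt (by positivity) hv
    rwa [Real.sqrt_mul (by norm_num), Real.sqrt_sq hγ] at this
  have hDpos : ∀ γ : ℝ, 1 ≤ γ → 0 < h γ → 0 ≤ pC m C γ → 0 < odeRHS m C v γ - 4 * γ := by
    intro γ h1 hhγ hp
    have hγ0 : (0:ℝ) ≤ γ := by linarith
    have hhγ' : h γ = v γ - 2 * γ ^ 2 := rfl
    have hv : 2 * γ ^ 2 < v γ := by linarith
    have hs := hsqrt_gt γ hγ0 hv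
    have hpγ : 0 ≤ pC m C γ * γ := mul_nonneg hp hγ0
    have hs2pos : (0:ℝ) < 2 * Real.sqrt 2 := by positivity
    have key : 2 * Real.sqrt 2 * (Real.sqrt 2 * γ) < 2 * Real.sqrt 2 * Real.sqrt (v γ) :=
      mul_lt_mul_of_pos_left hs hs2pos
    unfold odeRHS
    nlinarith [key, sqrt2_sq]
  have hDle : ∀ γ : ℝ, 1 ≤ γ → 0 < h γ → pC m C γ ≤ 0 →
      odeRHS m C v γ - 4 * γ - 2 * h γ ≤ 0 := by
    intro γ h1 hhγ hp
    have hγ0 : (0:ℝ) ≤ γ := by linarith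
    have hhγ' : h γ = v γ - 2 * γ ^ 2 := rfl
    have hv : 2 * γ ^ 2 < v γ := by linarith
    have hs := hsqrt_gt γ hγ0 hv
    have hpγ : pC m C γ * γ ≤ 0 := mul_nonpos_of_nonpos_of_nonneg hp hγ0
    have hv0 : (0:ℝ) ≤ v γ := by nlinarith
    have ht : Real.sqrt (v γ) ^ 2 = v γ := Real.sq_sqrt hv0
    have hfac : 0 ≤ (Real.sqrt (v γ) - Real.sqrt 2 * γ) *
        (Real.sqrt (v γ) + Real.sqrt 2 * γ - Real.sqrt 2) := by
      apply mul_nonneg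
      · linarith
      · nlinarith [Real.sqrt_nonneg (v γ), Real.sqrt_nonneg 2]
    rw [hhγ']
    unfold odeRHS
    nlinarith [hfac, sqrt2_sq, ht]
  have hmem1 : (1:ℝ) ∈ S := ⟨le_rfl, by linarith⟩
  have hmem2 : m + 1 ∈ S := ⟨by linarith, le_rfl⟩
  have hd1 : HasDerivWithinAt h 2 S 1 := by
    have := hderiv 1 hmem1
    convert this using 1
    unfold odeRHS
    rw [hv1, pC_one hm C]
    linear_combination (-2 : ℝ) * sqrt2_sq
  have hdend : HasDerivWithinAt h (-2*(m+1)) S (m+1) := by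
    have := hderiv (m+1) hmem2
    convert this using 1
    unfold odeRHS
    rw [hbc, pC_end hm C]
    have hsq : Real.sqrt (2*(m+1)^2) = Real.sqrt 2 * (m+1) := by
      rw [Real.sqrt_mul (by norm_num), Real.sqrt_sq (by linarith)]
    rw [hsq]
    linear_combination (-2*(m+1) : ℝ) * sqrt2_sq
  -- local positivity near 1
  have hloc1 : ∃ δ > 0, δ ≤ m ∧ ∀ γ, 1 < γ → γ < 1 + δ → 0 < h γ := by
    rw [hasDerivWithinAt_iff_tendsto_slope] at hd1
    have hev : ∀ᶠ y in nhdsWithin 1 (S \ {1}), 0 < slope h 1 y :=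
      hd1.eventually (eventually_gt_nhds (by norm_num))
    obtain ⟨ε, hε, hsub⟩ := Metric.mem_nhdsWithin_iff.mp hev
    refine ⟨min ε m, by positivity, min_le_right _ _, ?_⟩
    intro γ hγ1 hγδ
    have hεle := min_le_left ε m
    have hmle := min_le_right ε m
    have hγm : γ ≤ m + 1 := by linarith
    have hγball : γ ∈ Metric.ball (1:ℝ) ε := by
      rw [Metric.mem_ball, Real.dist_eq, abs_of_pos (by linarith : (0:ℝ) < γ - 1)]
      linarith
    have hmem : γ ∈ S \ {1} := ⟨⟨by linarith, hγm⟩, by simp; intro hc; simp [hc] at hγ1⟩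
    have := hsub ⟨hγball, hmem⟩
    rw [Set.mem_setOf_eq, slope_def_field, h1_0, sub_zero] at this
    have hγ1' : (0:ℝ) < γ - 1 := by linarith
    calc (0:ℝ) < h γ / (γ-1) * (γ-1) := mul_pos this hγ1'
      _ = h γ := div_mul_cancel₀ _ (ne_of_gt hγ1')
  -- local positivity near m+1
  have hlocend : ∃ δ > 0, δ ≤ m ∧ ∀ γ, m + 1 - δ < γ → γ < m + 1 → 0 < h γ := by
    rw [hasDerivWithinAt_iff_tendsto_slope] at hdend
    have hev : ∀ᶠ y in nhdsWithin (m+1) (S \ {m+1}), slope h (m+1) y < 0 :=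
      hdend.eventually (eventually_lt_nhds (by nlinarith))
    obtain ⟨ε, hε, hsub⟩ := Metric.mem_nhdsWithin_iff.mp hev
    refine ⟨min ε m, by positivity, min_le_right _ _, ?_⟩
    intro γ hγl hγr
    have hεle := min_le_left ε m
    have hmle := min_le_right ε m
    have h1γ : 1 ≤ γ := by linarith
    have hγball : γ ∈ Metric.ball (m+1) ε := by
      rw [Metric.mem_ball, Real.dist_eq, abs_of_neg (by linarith : γ - (m+1) < 0)]
      linarith
    have hmem : γ ∈ S \ {m+1} := ⟨⟨h1γ, by linarith⟩, by simp; intro hc; simp [hc] at hγr⟩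
    have := hsub ⟨hγball, hmem⟩
    rw [Set.mem_setOf_eq, slope_def_field, hend_0, sub_zero] at this
    have hd : γ - (m+1) < 0 := by linarith
    by_contra hc
    push_neg at hc
    have : 0 ≤ h γ / (γ - (m+1)) := div_nonneg_iff.mpr (Or.inr ⟨hc, hd.le⟩)
    linarith
  obtain ⟨γ₀, hγ₀1, hγ₀m, hppos, hpneg⟩ := exists_gamma0 hm C
  obtain ⟨δ₁, hδ₁0, hδ₁m, hloc1'⟩ := hloc1
  obtain ⟨δ₂, hδ₂0, hδ₂m, hloc2'⟩ := hlocend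
  have part1 : ∀ γ, 1 < γ → γ ≤ γ₀ → 0 < h γ := by
    by_contra hc
    push_neg at hc
    obtain ⟨γb, hγb1, hγbγ₀, hγb⟩ := hc
    have hγbδ : 1 + δ₁ ≤ γb := by
      by_contra hlt; push_neg at hlt
      exact absurd hγb (not_le.2 (hloc1' γb hγb1 hlt))
    set Z : Set ℝ := Icc (1+δ₁) γ₀ ∩ h ⁻¹' Iic 0 with hZ
    have hsubZ : Icc (1+δ₁) γ₀ ⊆ S := Icc_subset_Icc (by linarith) (by linarith)
    have hZc : IsClosed Z :=
      (hcont.mono hsubZ).preimage_isClosed_of_isClosed isClosed_Icc isClosed_Iic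
    have hZne : Z.Nonempty := ⟨γb, ⟨⟨hγbδ, hγbγ₀⟩, hγb⟩⟩
    have hZbdd : BddBelow Z := ⟨1+δ₁, fun x hx => hx.1.1⟩
    set γ₁ := sInf Z with hγ₁def
    have hγ₁Z : γ₁ ∈ Z := hZc.csInf_mem hZne hZbdd
    have hγ₁l : 1 + δ₁ ≤ γ₁ := hγ₁Z.1.1
    have hγ₁r : γ₁ ≤ γ₀ := hγ₁Z.1.2
    have hsub1 : Icc (1:ℝ) γ₁ ⊆ S := Icc_subset_Icc le_rfl (by linarith)
    have hmono : StrictMonoOn h (Icc 1 γ₁) := by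
      refine strictMonoOn_of_hasDerivWithinAt_pos (f' := fun x => odeRHS m C v x - 4*x)
        (convex_Icc 1 γ₁) (hcont.mono hsub1) ?_ ?_
      · intro x hx
        rw [interior_Icc] at hx
        rw [interior_Icc]
        have hxS : x ∈ S := ⟨hx.1.le, by linarith [hx.2]⟩
        exact ((hderiv x hxS).hasDerivAt (Icc_mem_nhds (by linarith [hx.1])
          (by linarith [hx.2]))).hasDerivWithinAt
      · intro x hx
        rw [interior_Icc] at hx
        have hhx : 0 < h x := by
          rcases lt_or_ge x (1+δ₁) with hcase | hcase
          · exact hloc1' x hx.1 hcase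
          · by_contra hxc; push_neg at hxc
            have hxZ : x ∈ Z := ⟨⟨hcase, by linarith [hx.2]⟩, hxc⟩
            exact absurd (csInf_le hZbdd hxZ) (not_le.2 hx.2)
        exact hDpos x hx.1.le hhx (hppos x hx.1.le (by linarith [hx.2]))
    have := hmono ⟨le_rfl, by linarith⟩ ⟨by linarith, le_rfl⟩ (by linarith : (1:ℝ) < γ₁)
    rw [h1_0] at this
    have hγ₁neg : h γ₁ ≤ 0 := hγ₁Z.2
    linarith
  have part2 : ∀ γ, γ₀ < γ → γ < m + 1 → 0 < h γ := by
    by_contra hc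
    push_neg at hc
    obtain ⟨γb, hγbγ₀, hγbm, hγb⟩ := hc
    have hγbδ : γb ≤ m + 1 - δ₂ := by
      by_contra hlt; push_neg at hlt
      exact absurd hγb (not_le.2 (hloc2' γb hlt hγbm))
    set K : Set ℝ := Icc γ₀ (m+1-δ₂) ∩ h ⁻¹' Iic 0 with hK
    have hKsubS : Icc γ₀ (m+1-δ₂) ⊆ S := Icc_subset_Icc (by linarith) (by linarith)
    have hKc : IsClosed K :=
      (hcont.mono hKsubS).preimage_isClosed_of_isClosed isClosed_Icc isClosed_Iic
    have hKne : K.Nonempty := ⟨γb, ⟨⟨hγbγ₀.le, hγbδ⟩, hγb⟩⟩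
    have hKbdd : BddAbove K := ⟨m+1-δ₂, fun x hx => hx.1.2⟩
    set γ₂ := sSup K with hγ₂def
    have hγ₂K : γ₂ ∈ K := hKc.csSup_mem hKne hKbdd
    have hγ₂l : γ₀ ≤ γ₂ := hγ₂K.1.1
    have hγ₂r : γ₂ ≤ m + 1 - δ₂ := hγ₂K.1.2
    have hγ₂neg : h γ₂ ≤ 0 := hγ₂K.2
    have hpos : ∀ x, γ₂ < x → x < m + 1 → 0 < h x := by
      intro x hx1 hx2
      rcases lt_or_ge (m+1-δ₂) x with hcase | hcase
      · exact hloc2' x hcase hx2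
      · by_contra hxc; push_neg at hxc
        have hxK : x ∈ K := ⟨⟨by linarith, hcase⟩, hxc⟩
        exact absurd (le_csSup hKbdd hxK) (not_le.2 hx1)
    set g : ℝ → ℝ := fun γ => h γ * Real.exp (-2*γ) with hg
    have hanti : AntitoneOn g (Icc γ₂ (m+1)) := by
      refine antitoneOn_of_hasDerivWithinAt_nonpos
        (f' := fun x => (odeRHS m C v x - 4*x) * Real.exp (-2*x) + h x * (Real.exp (-2*x) * -2))
        (convex_Icc _ _) ?_ ?_ ?_
      · exact (hcont.mono (Icc_subset_Icc (by linarith) le_rfl)).mul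
          (Real.continuous_exp.comp ((continuous_const (y := (-2:ℝ))).mul continuous_id)).continuousOn
      · intro x hx
        rw [interior_Icc] at hx
        have hxS : x ∈ S := ⟨by linarith [hx.1], hx.2.le⟩
        have hdx : HasDerivAt h (odeRHS m C v x - 4*x) x :=
          (hderiv x hxS).hasDerivAt (Icc_mem_nhds (by linarith [hx.1]) hx.2)
        have hin : HasDerivAt (fun y : ℝ => -2*y) (-2) x := by
          simpa using (hasDerivAt_id x).const_mul (-2:ℝ)
        have hex : HasDerivAt (fun y : ℝ => Real.exp (-2*y)) (Real.exp (-2*x) * -2) x := by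
          simpa using hin.exp
        rw [interior_Icc]
        exact (hdx.mul hex).hasDerivWithinAt
      · intro x hx
        rw [interior_Icc] at hx
        have hhx : 0 < h x := hpos x hx.1 hx.2
        have hpx : pC m C x < 0 := hpneg x (by linarith [hx.1]) hx.2.le
        have hDD := hDle x (by linarith [hx.1]) hhx hpx.le
        have hexp : (0:ℝ) < Real.exp (-2*x) := Real.exp_pos _
        have expand := mul_nonpos_of_nonpos_of_nonneg hDD hexp.le
        show (odeRHS m C v x - 4*x) * Real.exp (-2*x) + h x * (Real.exp (-2*x) * -2) ≤ 0
        nlinarith [expand]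
    have hmidlt : γ₂ < (γ₂ + (m+1))/2 := by linarith
    have hmidlt2 : (γ₂ + (m+1))/2 < m+1 := by linarith
    have hle : g ((γ₂+(m+1))/2) ≤ g γ₂ :=
      hanti ⟨le_rfl, by linarith⟩ ⟨by linarith, by linarith⟩ (by linarith)
    have hgγ₂ : g γ₂ ≤ 0 := mul_nonpos_of_nonpos_of_nonneg hγ₂neg (Real.exp_pos _).le
    have hmidpos : 0 < h ((γ₂+(m+1))/2) := hpos _ hmidlt hmidlt2
    have : 0 < g ((γ₂+(m+1))/2) := mul_pos hmidpos (Real.exp_pos _)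
    linarith
  intro γ hγ
  have hhγ : 0 < h γ := by
    rcases le_or_gt γ γ₀ with hcase | hcase
    · exact part1 γ hγ.1 hcase
    · exact part2 γ hcase hγ.2
  have hhγ' : h γ = v γ - 2 * γ ^ 2 := rfl
  linarith
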